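/- Every doubly nonnegative n×n matrix of rank 2 is completely positive with cp-rank equal to 2. -/

import Mathlib

open Matrix BigOperators

def Matrix.IsCP {n : Type*} [Fintype n] (A : Matrix n n ℝ) : Prop :=
  ∃ (m : ℕ) (B : Matrix (Fin m) n ℝ), (∀ i j, 0 ≤ B i j) ∧ A = Bᵀ * B

noncomputable def Matrix.cpRank {n : Type*} [Fintype n] (A : Matrix n n ℝ) : ℕ :=
  sInf {m | ∃ B : Matrix (Fin m) n ℝ, (∀ i j, 0 ≤ B i j) ∧ A = Bᵀ * B}

open Complex

lemma exists_z {n : ℕ} (A : Matrix (Fin n) (Fin n) ℝ) (hpsd : A.PosSemidef)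
    (hrank : A.rank = 2) :
    ∃ z : Fin n → ℂ, ∀ j l, A j l = (z j * (starRingEnd ℂ) (z l)).re := by
  classical
  have hA : A.IsHermitian := hpsd.isHermitian
  have hcard : Fintype.card {i // hA.eigenvalues i ≠ 0} = 2 := by
    rw [← hA.rank_eq_card_non_zero_eigs, hrank]
  let e : Fin 2 ≃ {i // hA.eigenvalues i ≠ 0} := (Fintype.equivFinOfCardEq hcard).symm
  set V : Matrix (Fin n) (Fin n) ℝ := (hA.eigenvectorUnitary : Matrix (Fin n) (Fin n) ℝ) with hV
  set ev := hA.eigenvalues with hev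
  have hspec : A = V * Matrix.diagonal (RCLike.ofReal ∘ ev) * star V := hA.spectral_theorem
  have hAapp : ∀ j l, A j l = ∑ i, ev i * (V j i * V l i) := by
    intro j l
    rw [hspec]
    rw [Matrix.mul_apply]
    refine Finset.sum_congr rfl fun i _ => ?_
    rw [Matrix.mul_apply, Finset.sum_eq_single i]
    · simp [Matrix.diagonal_apply, Matrix.star_apply, RCLike.ofReal]
      ring
    · intro b _ hb; simp [Matrix.diagonal_apply_ne _ hb]
    · simp
  set i0 : Fin n := (e 0 : Fin n) with hi0
  set i1 : Fin n := (e 1 : Fin n) with hi1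
  have hnn0 : 0 ≤ ev i0 := hpsd.eigenvalues_nonneg (e 0 : {i // hA.eigenvalues i ≠ 0})
  have hnn1 : 0 ≤ ev i1 := hpsd.eigenvalues_nonneg (e 1 : {i // hA.eigenvalues i ≠ 0})
  refine ⟨fun j => (Real.sqrt (ev i0) * V j i0 : ℝ) + (Real.sqrt (ev i1) * V j i1 : ℝ) * I, ?_⟩
  intro j l
  have hre : (((Real.sqrt (ev i0) * V j i0 : ℝ) + (Real.sqrt (ev i1) * V j i1 : ℝ) * I) *
      (starRingEnd ℂ) ((Real.sqrt (ev i0) * V l i0 : ℝ) + (Real.sqrt (ev i1) * V l i1 : ℝ) * I)).re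
      = (Real.sqrt (ev i0) * Real.sqrt (ev i0)) * (V j i0 * V l i0)
        + (Real.sqrt (ev i1) * Real.sqrt (ev i1)) * (V j i1 * V l i1) := by
    simp [Complex.add_re, Complex.mul_re]
    ring
  rw [hre, Real.mul_self_sqrt hnn0, Real.mul_self_sqrt hnn1, hAapp]
  have hsum : ∑ i, ev i * (V j i * V l i)
      = ∑ i ∈ Finset.univ.filter (fun i => ev i ≠ 0), ev i * (V j i * V l i) := by
    rw [Finset.sum_filter_of_ne]
    intro i _ h hzero
    exact h (by rw [hzero, zero_mul])
  rw [hsum, Finset.sum_subtype (p := fun i => ev i ≠ 0) (Finset.univ.filter (fun i => ev i ≠ 0))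
      (fun i => by simp) (fun i => ev i * (V j i * V l i)),
    ← Equiv.sum_comp e (fun i => ev (i : Fin n) * (V j (i : Fin n) * V l (i : Fin n)))]
  simp [Fin.sum_univ_two]
  rfl

lemma rotate {n : ℕ} (z : Fin n → ℂ)
    (h : ∀ j l, 0 ≤ (z j * (starRingEnd ℂ) (z l)).re) :
    ∃ B : Matrix (Fin 2) (Fin n) ℝ, (∀ i j, 0 ≤ B i j) ∧
      ∀ j l, B 0 j * B 0 l + B 1 j * B 1 l = (z j * (starRingEnd ℂ) (z l)).re := by
  classical
  by_cases hz : ∀ j, z j = 0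
  · exact ⟨0, fun i j => le_refl 0, fun j l => by simp [hz j]⟩
  push_neg at hz
  obtain ⟨j0, hj0⟩ := hz
  have hmulre : ∀ (u : ℂ) (r : ℝ), (u * (r:ℂ)).re = u.re * r ∧ (u * (r:ℂ)).im = u.im * r := by
    intro u r; constructor <;> simp [Complex.mul_re, Complex.mul_im]
  have hdiv_eq : ∀ j l, z l ≠ 0 →
      z j * (starRingEnd ℂ) (z l) = (z j / z l) * ((Complex.normSq (z l) : ℝ) : ℂ) := by
    intro j l hl
    rw [div_mul_eq_mul_div, ← Complex.mul_conj]
    field_simp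
  have hdivre : ∀ j l, z l ≠ 0 → 0 ≤ (z j / z l).re := by
    intro j l hl
    have h1 := (hmulre (z j / z l) (Complex.normSq (z l))).1
    rw [← hdiv_eq j l hl] at h1
    have hpos : 0 < Complex.normSq (z l) := Complex.normSq_pos.2 hl
    nlinarith [h j l]
  have hS : (Finset.univ.filter (fun j => z j ≠ 0)).Nonempty := ⟨j0, by simp [hj0]⟩
  obtain ⟨j1, hj1S, hj1min⟩ := Finset.exists_min_image _ (fun j => (z j / z j0).arg) hS
  have hj1 : z j1 ≠ 0 := (Finset.mem_filter.1 hj1S).2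
  have key : ∀ j, z j ≠ 0 → 0 ≤ (z j / z j1).arg := by
    intro j hjz
    by_contra hneg
    push_neg at hneg
    set a := (z j / z j1).arg with ha
    set b := (z j1 / z j0).arg with hb
    set c := (z j / z j0).arg with hc
    have hane : z j / z j1 ≠ 0 := div_ne_zero hjz hj1
    have hbne : z j1 / z j0 ≠ 0 := div_ne_zero hj1 hj0
    have habs_a := abs_le.1 (Complex.abs_arg_le_pi_div_two_iff.2 (hdivre j j1 hj1))
    have habs_b := abs_le.1 (Complex.abs_arg_le_pi_div_two_iff.2 (hdivre j1 j0 hj0))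
    have habs_c := abs_le.1 (Complex.abs_arg_le_pi_div_two_iff.2 (hdivre j j0 hj0))
    have hprod : z j / z j0 = (z j / z j1) * (z j1 / z j0) := by
      field_simp
    have hangle : (c : Real.Angle) = ((a + b : ℝ) : Real.Angle) := by
      rw [hc, hprod, Complex.arg_mul_coe_angle hane hbne, Real.Angle.coe_add]
    obtain ⟨k, hk⟩ := Real.Angle.angle_eq_iff_two_pi_dvd_sub.1 hangle
    have hpi : (0:ℝ) < Real.pi := Real.pi_pos
    have hk0 : k = 0 := by
      have hkabs : |(k:ℝ)| < 1 := by
        have h1 : |c - (a + b)| ≤ 3 * Real.pi / 2 := by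
          rw [abs_le]
          constructor <;> [nlinarith [habs_a.1, habs_b.1, habs_c.1, habs_a.2, habs_b.2, habs_c.2];
            nlinarith [habs_a.1, habs_b.1, habs_c.1, habs_a.2, habs_b.2, habs_c.2]]
        rw [hk, abs_mul, _root_.abs_of_nonneg (by positivity : (0:ℝ) ≤ 2*Real.pi)] at h1
        nlinarith [abs_nonneg ((k:ℝ))]
      have hk1 : |k| < 1 := by exact_mod_cast (by rwa [← Int.cast_abs] at hkabs : ((|k|:ℤ):ℝ) < 1)
      rw [abs_lt] at hk1
      omega
    rw [hk0] at hk
    push_cast at hk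
    have hceq : c = a + b := by linarith
    have hmin : b ≤ c := hj1min j (Finset.mem_filter.2 ⟨Finset.mem_univ _, hjz⟩)
    linarith
  -- construct B
  set w := z j1 with hw
  set r := ‖w‖ with hr
  have hrpos : 0 < r := norm_pos_iff.2 hj1
  refine ⟨Matrix.of fun i j => if i = 0 then (z j * (starRingEnd ℂ) w).re / r
      else (z j * (starRingEnd ℂ) w).im / r, ?_, ?_⟩
  · intro i j
    simp only [Matrix.of_apply]
    split
    · exact div_nonneg (h j j1) hrpos.le
    · refine div_nonneg ?_ hrpos.le
      by_cases hjz : z j = 0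
      · simp [hjz]
      · have him : 0 ≤ (z j / w).im := Complex.arg_nonneg_iff.1 (key j hjz)
        have h2 := (hmulre (z j / w) (Complex.normSq w)).2
        rw [← hdiv_eq j j1 hj1] at h2
        have hpos : 0 < Complex.normSq w := Complex.normSq_pos.2 hj1
        nlinarith
  · intro j l
    simp only [Matrix.of_apply, if_pos rfl, if_neg (by decide : (1 : Fin 2) ≠ 0), eq_self_iff_true, if_true]
    have hre2 : ∀ u v : ℂ, (u * (starRingEnd ℂ) v).re = u.re * v.re + u.im * v.im := by
      intro u v; simp [Complex.mul_re]
    have e1 : (z j * (starRingEnd ℂ) w) * (starRingEnd ℂ) (z l * (starRingEnd ℂ) w)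
        = (z j * (starRingEnd ℂ) (z l)) * ((Complex.normSq w : ℝ) : ℂ) := by
      rw [_root_.map_mul, Complex.conj_conj, ← Complex.mul_conj]
      ring
    have hnum : (z j * (starRingEnd ℂ) w).re * (z l * (starRingEnd ℂ) w).re
        + (z j * (starRingEnd ℂ) w).im * (z l * (starRingEnd ℂ) w).im
        = (z j * (starRingEnd ℂ) (z l)).re * (r * r) := by
      rw [← hre2 (z j * (starRingEnd ℂ) w) (z l * (starRingEnd ℂ) w), e1,
        (hmulre _ _).1, ← Complex.norm_mul_self_eq_normSq]
    have hrr : (z j * (starRingEnd ℂ) w).re / r * ((z l * (starRingEnd ℂ) w).re / r)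
        + (z j * (starRingEnd ℂ) w).im / r * ((z l * (starRingEnd ℂ) w).im / r)
        = ((z j * (starRingEnd ℂ) w).re * (z l * (starRingEnd ℂ) w).re
          + (z j * (starRingEnd ℂ) w).im * (z l * (starRingEnd ℂ) w).im) / (r * r) := by
      field_simp
    rw [hrr, hnum, mul_div_assoc, div_self (by positivity), mul_one]

theorem stmt_7 (n : ℕ) (A : Matrix (Fin n) (Fin n) ℝ)
    (hnn : ∀ i j, 0 ≤ A i j) (hpsd : A.PosSemidef) (hrank : A.rank = 2) :
    A.IsCP ∧ A.cpRank = 2 := by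
  obtain ⟨z, hzA⟩ := exists_z A hpsd hrank
  have hpos : ∀ j l, 0 ≤ (z j * (starRingEnd ℂ) (z l)).re := by
    intro j l; rw [← hzA]; exact hnn j l
  obtain ⟨B, hBnn, hBsum⟩ := rotate z hpos
  have hdecomp : A = Bᵀ * B := by
    ext j l
    rw [Matrix.mul_apply, Fin.sum_univ_two]
    simp only [Matrix.transpose_apply]
    rw [hBsum j l, hzA]
  have hmem : (2 : ℕ) ∈ {m | ∃ B : Matrix (Fin m) (Fin n) ℝ, (∀ i j, 0 ≤ B i j) ∧ A = Bᵀ * B} :=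
    ⟨B, hBnn, hdecomp⟩
  have hlower : ∀ m ∈ {m | ∃ B : Matrix (Fin m) (Fin n) ℝ, (∀ i j, 0 ≤ B i j) ∧ A = Bᵀ * B},
      2 ≤ m := by
    rintro m ⟨C, -, hC⟩
    calc 2 = A.rank := hrank.symm
      _ ≤ C.rank := by rw [hC]; exact Matrix.rank_mul_le_right _ _
      _ ≤ Fintype.card (Fin m) := Matrix.rank_le_card_height C
      _ = m := Fintype.card_fin m
  refine ⟨⟨2, B, hBnn, hdecomp⟩, le_antisymm (Nat.sInf_le hmem) (le_csInf ⟨2, hmem⟩ hlower)⟩
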